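/- Let a ∈ ℤ/mℤ, d ∈ (ℤ/mℤ)^{n-1}, and suppose σ is invertible modulo m. Then the orbit O(AA(a,d)) = (a_i)_{i∈ℤ^{n-1}×ℕ} of the arithmetic array AA(a,d) under the ACA satisfies a_i = σ^{i_n}(a + Σ_{k=1}^n i_k d_k) for all i ∈ ℤ^{n-1}×ℕ, where d_n := σ^{-1} Σ_{k=1}^{n-1} σ_k d_k. -/

import Mathlib

open Finset

/-- The box `[-r, r]^N` of indices of the weight array. -/
noncomputable def box (r N : ℕ) : Finset (Fin N → ℤ) :=
  Fintype.piFinset fun _ : Fin N => Finset.Icc (-(r : ℤ)) (r : ℤ)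

/-- The arithmetic array `AA(a, d)` with first element `a` and common difference `d`. -/
def AA (m N : ℕ) (a : ZMod m) (d : Fin N → ZMod m) : (Fin N → ℤ) → ZMod m :=
  fun i => a + ∑ k, (i k : ZMod m) * d k

/-- The additive cellular automaton of dimension `N`, radius `r` and weight array `W`. -/
noncomputable def ACA (m N r : ℕ) (W : (Fin N → ℤ) → ℤ) (A : (Fin N → ℤ) → ZMod m) :
    (Fin N → ℤ) → ZMod m :=
  fun i => ∑ j ∈ box r N, (W j : ZMod m) * A (i + j)

/-- Entries of the orbit of an arithmetic array: `a_i = σ^(i_n) (a + ∑_{k=1}^n i_k d_k)`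
where `d_n := σ⁻¹ ∑ σ_k d_k`, provided `σ` is invertible. -/
theorem stmt6 (m N r : ℕ) (W : (Fin N → ℤ) → ℤ) (a : ZMod m) (d : Fin N → ZMod m)
    (hσ : IsUnit ((∑ j ∈ box r N, W j : ℤ) : ZMod m))
    (i : Fin N → ℤ) (j : ℕ) :
    (ACA m N r W)^[j] (AA m N a d) i =
      ((∑ j ∈ box r N, W j : ℤ) : ZMod m) ^ j *
        (a + ∑ k, (i k : ZMod m) * d k +
          (j : ZMod m) *
            (((∑ j ∈ box r N, W j : ℤ) : ZMod m)⁻¹ *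
              ∑ k, ((∑ j ∈ box r N, j k * W j : ℤ) : ZMod m) * d k)) := by
  set σ : ZMod m := ((∑ j ∈ box r N, W j : ℤ) : ZMod m) with hσdef
  set c : ZMod m := ∑ k, ((∑ j ∈ box r N, j k * W j : ℤ) : ZMod m) * d k with hcdef
  have hunit : σ * σ⁻¹ = 1 := ZMod.mul_inv_of_unit σ hσ
  induction j generalizing i with
  | zero => simp [AA]
  | succ j ih =>
    rw [Function.iterate_succ_apply']
    simp only [ACA]
    have key : ∀ x : ZMod m,
        ∑ l ∈ box r N, (W l : ZMod m) *
            (σ ^ j * (a + ∑ k, (((i + l) k : ℤ) : ZMod m) * d k + x)) =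
          σ ^ j * (σ * (a + ∑ k, ((i k : ℤ) : ZMod m) * d k + x) + c) := by
      intro x
      have expand : ∀ l : Fin N → ℤ,
          (a + ∑ k, (((i + l) k : ℤ) : ZMod m) * d k + x) =
            (a + ∑ k, ((i k : ℤ) : ZMod m) * d k + x) +
              ∑ k, ((l k : ℤ) : ZMod m) * d k := by
        intro l
        simp only [Pi.add_apply]
        push_cast
        rw [Finset.sum_congr rfl fun k _ =>
          add_mul ((i k : ZMod m)) ((l k : ZMod m)) (d k), Finset.sum_add_distrib]
        ring
      simp only [expand]
      have step : ∀ l : Fin N → ℤ, (W l : ZMod m) *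
          (σ ^ j * ((a + ∑ k, ((i k : ℤ) : ZMod m) * d k + x) +
            ∑ k, ((l k : ℤ) : ZMod m) * d k)) =
          σ ^ j * ((W l : ZMod m) * (a + ∑ k, ((i k : ℤ) : ZMod m) * d k + x) +
            ∑ k, (W l : ZMod m) * (((l k : ℤ) : ZMod m) * d k)) := by
        intro l
        rw [← Finset.mul_sum]
        ring
      simp only [step]
      rw [← Finset.mul_sum]
      congr 1
      rw [Finset.sum_add_distrib]
      congr 1
      · rw [← Finset.sum_mul, hσdef]
        push_cast
        ring
      · rw [Finset.sum_comm, hcdef]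
        refine Finset.sum_congr rfl fun k _ => ?_
        push_cast
        rw [Finset.sum_mul]
        refine Finset.sum_congr rfl fun l _ => ?_
        ring
    simp only [ih, key]
    push_cast
    have hσT : σ ^ (j + 1) * (σ⁻¹ * c) = σ ^ j * c := by
      rw [pow_succ]
      calc σ ^ j * σ * (σ⁻¹ * c) = σ ^ j * (σ * σ⁻¹) * c := by ring
      _ = σ ^ j * c := by rw [hunit]; ring
    linear_combination (-(1 : ZMod m)) * hσT
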